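/- arXiv:2006.15642 — 2 statements merged into one kernel-verified Lean document; each statement's English description precedes it below -/
import Mathlib

section
/- Let m ≥ 2 and let T ∈ B(H) be an m-isometry satisfying the (m-1)-kernel condition. Then T^{n-1}(Ker(T*)) ⊆ Ker((T*)^n) for every n ∈ ℕ. -/
open ContinuousLinearMap MeasureTheory

noncomputable section

variable {H : Type*} [NormedAddCommGroup H] [InnerProductSpace ℂ H] [CompleteSpace H]

/-- `T^{[k]} = (T*)^k T^k`. -/
def opBr (T : H →L[ℂ] H) (k : ℕ) : H →L[ℂ] H :=
  ((ContinuousLinearMap.adjoint T) ^ k).comp (T ^ k)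

/-- `T` is an `m`-isometry: `∑_{p=0}^m (-1)^p (m choose p) T^{[p]} = 0`. -/
def IsMIsometry (T : H →L[ℂ] H) (m : ℕ) : Prop :=
  ∑ p ∈ Finset.range (m + 1), ((-1 : ℂ) ^ p * (m.choose p : ℂ)) • opBr T p = 0

/-- `T` satisfies the `k`-kernel condition: `Ker T*` is invariant under `T^{[n]}`
for every `n ∈ {1, …, k}`. -/
def KernelCondition (T : H →L[ℂ] H) (k : ℕ) : Prop :=
  ∀ n, 1 ≤ n → n ≤ k →
    ∀ x ∈ LinearMap.ker ((ContinuousLinearMap.adjoint T : H →L[ℂ] H) : H →ₗ[ℂ] H),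
      opBr T n x ∈ LinearMap.ker ((ContinuousLinearMap.adjoint T : H →L[ℂ] H) : H →ₗ[ℂ] H)

lemma opBr_shift (T : H →L[ℂ] H) (p j : ℕ) (x : H) :
    opBr T (p + j) x = ((ContinuousLinearMap.adjoint T) ^ j) (opBr T p ((T ^ j) x)) := by
  simp only [opBr, ContinuousLinearMap.comp_apply]
  have h1 : (T ^ (p + j)) x = (T ^ p) ((T ^ j) x) := by
    rw [pow_add]; rfl
  have h2 : ∀ y, ((ContinuousLinearMap.adjoint T) ^ (p + j)) y
      = ((ContinuousLinearMap.adjoint T) ^ j) (((ContinuousLinearMap.adjoint T) ^ p) y) := by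
    intro y
    rw [add_comm, pow_add]; rfl
  rw [h1, h2]

lemma isometry_shift (T : H →L[ℂ] H) (m j : ℕ) (hT : IsMIsometry T m) (x : H) :
    ∑ p ∈ Finset.range (m + 1), ((-1 : ℂ) ^ p * (m.choose p : ℂ)) • opBr T (p + j) x = 0 := by
  have h0 := congrArg (fun S : H →L[ℂ] H => S ((T ^ j) x)) hT
  simp only [ContinuousLinearMap.sum_apply, ContinuousLinearMap.smul_apply,
    ContinuousLinearMap.zero_apply] at h0
  calc ∑ p ∈ Finset.range (m + 1), ((-1 : ℂ) ^ p * (m.choose p : ℂ)) • opBr T (p + j) x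
      = ((ContinuousLinearMap.adjoint T) ^ j)
          (∑ p ∈ Finset.range (m + 1), ((-1 : ℂ) ^ p * (m.choose p : ℂ)) • opBr T p ((T ^ j) x)) := by
        rw [map_sum]
        refine Finset.sum_congr rfl fun p _ => ?_
        rw [_root_.map_smul, opBr_shift]
    _ = 0 := by rw [h0, map_zero]

lemma ker_stable (T : H →L[ℂ] H) (m : ℕ) (hm : 2 ≤ m)
    (hT : IsMIsometry T m) (hkc : KernelCondition T (m - 1)) {x : H}
    (hx : x ∈ LinearMap.ker ((ContinuousLinearMap.adjoint T : H →L[ℂ] H) : H →ₗ[ℂ] H)) :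
    ∀ k, opBr T k x ∈ LinearMap.ker ((ContinuousLinearMap.adjoint T : H →L[ℂ] H) : H →ₗ[ℂ] H) := by
  intro k
  induction k using Nat.strong_induction_on with
  | _ k ih =>
    rcases Nat.lt_or_ge k m with hk | hk
    · rcases Nat.eq_zero_or_pos k with rfl | hk1
      · simpa [opBr] using hx
      · exact hkc k hk1 (by omega) x hx
    · have hs := isometry_shift T m (k - m) hT x
      rw [Finset.sum_range_succ] at hs
      have hmk : m + (k - m) = k := by omega
      rw [hmk] at hs
      have heq : ((-1 : ℂ) ^ m * (m.choose m : ℂ)) • opBr T k x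
          = - ∑ p ∈ Finset.range m, ((-1 : ℂ) ^ p * (m.choose p : ℂ)) • opBr T (p + (k - m)) x :=
        eq_neg_of_add_eq_zero_right hs
      have hc : ((-1 : ℂ) ^ m * (m.choose m : ℂ)) ≠ 0 := by
        simp [pow_ne_zero]
      have hmem : ((-1 : ℂ) ^ m * (m.choose m : ℂ)) • opBr T k x
          ∈ LinearMap.ker ((ContinuousLinearMap.adjoint T : H →L[ℂ] H) : H →ₗ[ℂ] H) := by
        rw [heq]
        exact Submodule.neg_mem _ (Submodule.sum_mem _ fun p hp =>
          Submodule.smul_mem _ _ (ih (p + (k - m)) (by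
            have := Finset.mem_range.mp hp; omega)))
      have h2 := Submodule.smul_mem _ ((-1 : ℂ) ^ m * (m.choose m : ℂ))⁻¹ hmem
      rwa [smul_smul, inv_mul_cancel₀ hc, one_smul] at h2

/-- Proposition 2.2. If `m ≥ 2` and `T` is an `m`-isometry satisfying the
`(m-1)`-kernel condition, then `T^{n-1}(Ker T*) ⊆ Ker (T*)^n` for every `n ∈ ℕ`. -/
theorem mIsometry_image_ker_subset (T : H →L[ℂ] H) (m : ℕ) (hm : 2 ≤ m)
    (hT : IsMIsometry T m) (hkc : KernelCondition T (m - 1)) (n : ℕ) (hn : 1 ≤ n) :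
    (T ^ (n - 1)) '' (LinearMap.ker ((ContinuousLinearMap.adjoint T : H →L[ℂ] H) : H →ₗ[ℂ] H) : Set H) ⊆
      (LinearMap.ker (((ContinuousLinearMap.adjoint T) ^ n : H →L[ℂ] H) : H →ₗ[ℂ] H) : Set H) := by
  rintro y ⟨x, hx, rfl⟩
  have hker := ker_stable T m hm hT hkc hx (n - 1)
  have hker' : ContinuousLinearMap.adjoint T (opBr T (n - 1) x) = 0 :=
    LinearMap.mem_ker.mp hker
  have hn' : n = (n - 1) + 1 := by omega
  show ((ContinuousLinearMap.adjoint T) ^ n) ((T ^ (n - 1)) x) = 0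
  rw [hn', pow_succ']
  show ContinuousLinearMap.adjoint T
    (((ContinuousLinearMap.adjoint T) ^ (n - 1)) ((T ^ (n - 1)) x)) = 0
  exact hker'
end
end

section
/- Let (X, A, μ) be a discrete measure space, φ : X → X a map such that the composition operator C_φ is bounded on L²(μ) and left-invertible, and let k ∈ ℕ. Then C_φ satisfies the k-kernel condition if and only if the Radon–Nikodym derivative h is constant on the preimage φ^{-i}({x}) for every i ∈ {1,…,k} and every x ∈ X. -/
open ContinuousLinearMap MeasureTheory

noncomputable section

variable {H : Type*} [NormedAddCommGroup H] [InnerProductSpace ℂ H] [CompleteSpace H]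

section CompKCAux
open Set
set_option linter.unusedSectionVars false
set_option maxHeartbeats 1000000

namespace CompKC

local notation "⟪" x ", " y "⟫" => @inner ℂ _ _ x y

variable {X : Type*} [MeasurableSpace X] [MeasurableSingletonClass X] [Countable X]
  {μ : Measure X}

lemma meas_eq_tsum (μ : Measure X) (s : Set X) : μ s = ∑' x : s, μ {(x : X)} := by
  rw [← setLIntegral_one, lintegral_countable _ s.to_countable]
  simp

lemma null_iff (hμ : ∀ x : X, 0 < μ {x}) {s : Set X} : μ s = 0 ↔ s = ∅ := by
  constructor
  · intro h
    by_contra hne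
    obtain ⟨x, hx⟩ := Set.nonempty_iff_ne_empty.2 hne
    exact absurd (le_antisymm (h ▸ measure_mono (Set.singleton_subset_iff.2 hx)) zero_le)
      (hμ x).ne'
  · rintro rfl; simp

lemma aeeq_all (hμ : ∀ x : X, 0 < μ {x}) {α : Type*} {f g : X → α} (h : f =ᵐ[μ] g) :
    ∀ x, f x = g x := by
  intro x
  by_contra hx
  rw [Filter.EventuallyEq, ae_iff] at h
  have := (null_iff hμ).1 h
  simp only [Set.eq_empty_iff_forall_notMem] at this
  exact this x hx

variable (hμ : ∀ x : X, 0 < μ {x} ∧ μ {x} < ⊤)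

def chi (y : X) : Lp ℂ 2 μ :=
  indicatorConstLp 2 (measurableSet_singleton y) (hμ y).2.ne (1 : ℂ)

lemma chi_apply (y x : X) :
    (chi hμ y : Lp ℂ 2 μ) x = Set.indicator {y} (fun _ => (1:ℂ)) x := by
  exact aeeq_all (fun x => (hμ x).1) (indicatorConstLp_coeFn (p := 2)
    (hs := measurableSet_singleton y) (hμs := (hμ y).2.ne) (c := (1:ℂ))) x

lemma chi_self (y : X) : (chi hμ y : Lp ℂ 2 μ) y = 1 := by
  rw [chi_apply hμ]; simp

lemma chi_ne {y x : X} (h : x ≠ y) : (chi hμ y : Lp ℂ 2 μ) x = 0 := by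
  rw [chi_apply hμ]; simp [h]

lemma inner_tsum (f g : Lp ℂ 2 μ) :
    ⟪f, g⟫ = ∑' x, ((μ {x}).toReal : ℂ) * ((starRingEnd ℂ) (f x) * g x) := by
  rw [L2.inner_def, integral_countable' (L2.integrable_inner f g)]
  refine tsum_congr fun x => ?_
  rw [RCLike.inner_apply, Complex.real_smul]
  simp only [Measure.real]; ring

lemma eval_inner (g : Lp ℂ 2 μ) (y : X) :
    ⟪(chi hμ y : Lp ℂ 2 μ), g⟫ = ((μ {y}).toReal : ℂ) * g y := by
  rw [inner_tsum]
  rw [tsum_eq_single y]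
  · rw [chi_self hμ]; simp
  · intro x hx
    rw [chi_ne hμ hx]
    simp

include hμ in
lemma Lp_eq_zero_iff (g : Lp ℂ 2 μ) : g = 0 ↔ ∀ x, (g : X → ℂ) x = 0 := by
  constructor
  · intro h x
    subst h
    simpa using aeeq_all (fun x => (hμ x).1) (Lp.coeFn_zero ℂ 2 μ) x
  · intro h
    ext1
    filter_upwards with x
    rw [h x]
    simpa using (aeeq_all (fun x => (hμ x).1) (Lp.coeFn_zero ℂ 2 μ) x).symm

variable {φ : X → X} {C : Lp ℂ 2 μ →L[ℂ] Lp ℂ 2 μ}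
  (hC : ∀ f : Lp ℂ 2 μ, (C f : X → ℂ) =ᵐ[μ] fun x => f (φ x))

include hμ hC

omit hC in
lemma toReal_ne_zero (y : X) : (μ {y}).toReal ≠ 0 :=
  ENNReal.toReal_ne_zero.2 ⟨(hμ y).1.ne', (hμ y).2.ne⟩

lemma C_apply (f : Lp ℂ 2 μ) (x : X) : (C f : X → ℂ) x = f (φ x) :=
  aeeq_all (fun x => (hμ x).1) (hC f) x

lemma Cpow_apply (n : ℕ) (f : Lp ℂ 2 μ) (x : X) : ((C ^ n) f : X → ℂ) x = f (φ^[n] x) := by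
  induction n generalizing f x with
  | zero => simp
  | succ n ih =>
    rw [pow_succ, ContinuousLinearMap.mul_apply, ih, C_apply hμ hC,
      Function.iterate_succ_apply']

omit hμ hC in
/-- the fiber sum defining membership in `ker C*` -/
def fsum (μ : Measure X) (φ : X → X) (g : X → ℂ) (y : X) : ℂ :=
  ∑' x : (φ ⁻¹' {y} : Set X), ((μ {(x : X)}).toReal : ℂ) * g x

lemma inner_C_chi (g : Lp ℂ 2 μ) (y : X) :
    ⟪C (chi hμ y), g⟫ = fsum μ φ (g : X → ℂ) y := by
  rw [inner_tsum, fsum,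
    tsum_subtype (φ ⁻¹' {y}) (fun x => ((μ {x}).toReal : ℂ) * (g : X → ℂ) x)]
  refine tsum_congr fun x => ?_
  rw [C_apply hμ hC]
  by_cases h : φ x = y
  · rw [h, chi_self hμ, Set.indicator_of_mem (show x ∈ φ ⁻¹' {y} from h)]
    simp
  · rw [chi_ne hμ h, Set.indicator_of_notMem (show x ∉ φ ⁻¹' {y} from h)]
    simp

lemma mem_ker_iff (g : Lp ℂ 2 μ) :
    g ∈ LinearMap.ker ((ContinuousLinearMap.adjoint C : Lp ℂ 2 μ →L[ℂ] Lp ℂ 2 μ) : Lp ℂ 2 μ →ₗ[ℂ] Lp ℂ 2 μ) ↔ ∀ y, fsum μ φ (g : X → ℂ) y = 0 := by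
  rw [LinearMap.mem_ker, ContinuousLinearMap.coe_coe, Lp_eq_zero_iff hμ]
  constructor
  · intro h y
    rw [← inner_C_chi hμ hC, ← ContinuousLinearMap.adjoint_inner_right, eval_inner hμ, h y,
      mul_zero]
  · intro h y
    have := h y
    rw [← inner_C_chi hμ hC, ← ContinuousLinearMap.adjoint_inner_right, eval_inner hμ] at this
    exact (mul_eq_zero.1 this).resolve_left (by
      simpa using toReal_ne_zero hμ y)

lemma fiber_ne_top (n : ℕ) (y : X) : μ ((φ^[n]) ⁻¹' {y}) ≠ ⊤ := by
  have heq : ∀ x, (((C ^ n) (chi hμ y) : Lp ℂ 2 μ) : X → ℂ) x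
      = Set.indicator ((φ^[n]) ⁻¹' {y}) (fun _ => (1 : ℂ)) x := by
    intro x
    rw [Cpow_apply hμ hC]
    by_cases h : φ^[n] x = y
    · rw [h, chi_self hμ, Set.indicator_of_mem (show x ∈ (φ^[n]) ⁻¹' {y} from h)]
    · rw [chi_ne hμ h, Set.indicator_of_notMem (show x ∉ (φ^[n]) ⁻¹' {y} from h)]
  have hmem : MemLp (Set.indicator ((φ^[n]) ⁻¹' {y}) (fun _ => (1 : ℂ))) 2 μ :=
    (Lp.memLp ((C ^ n) (chi hμ y))).ae_eq (Filter.EventuallyEq.of_eq (funext heq))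
  have h2 := hmem.2
  rw [eLpNorm_indicator_const ((Set.to_countable _).measurableSet) (by norm_num)
    (by norm_num)] at h2
  intro htop
  rw [htop] at h2
  simp [ENNReal.top_rpow_of_pos] at h2

lemma Cpow_chi_inner (n : ℕ) (g : Lp ℂ 2 μ) (y : X) :
    ⟪(C ^ n) (chi hμ y), (C ^ n) g⟫ = ((μ ((φ^[n]) ⁻¹' {y})).toReal : ℂ) * g y := by
  rw [inner_tsum]
  have : ∀ x : X, ((μ {x}).toReal : ℂ) *
      ((starRingEnd ℂ) (((C ^ n) (chi hμ y) : X → ℂ) x) * ((C ^ n) g : X → ℂ) x) =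
      (Set.indicator ((φ^[n]) ⁻¹' {y}) (fun x => ((μ {x}).toReal : ℂ)) x) * g y := by
    intro x
    rw [Cpow_apply hμ hC, Cpow_apply hμ hC]
    by_cases h : φ^[n] x = y
    · rw [h, chi_self hμ,
        Set.indicator_of_mem (show x ∈ (φ^[n]) ⁻¹' {y} from h)]
      simp [mul_comm]
    · rw [chi_ne hμ h,
        Set.indicator_of_notMem (show x ∉ (φ^[n]) ⁻¹' {y} from h)]
      simp
  rw [tsum_congr this, tsum_mul_right]
  congr 1
  rw [← tsum_subtype, ← Complex.ofReal_tsum, ← ENNReal.tsum_toReal_eq fun a => (hμ _).2.ne,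
    ← meas_eq_tsum]

lemma opBr_eval (n : ℕ) (g : Lp ℂ 2 μ) (y : X) :
    ((μ {y}).toReal : ℂ) * ((opBr C n g : Lp ℂ 2 μ) : X → ℂ) y =
      ((μ ((φ^[n]) ⁻¹' {y})).toReal : ℂ) * g y := by
  have hadj : (ContinuousLinearMap.adjoint C) ^ n = ContinuousLinearMap.adjoint (C ^ n) := by
    rw [← ContinuousLinearMap.star_eq_adjoint, ← ContinuousLinearMap.star_eq_adjoint, star_pow]
  rw [← eval_inner hμ, opBr, ContinuousLinearMap.comp_apply, hadj,
    ContinuousLinearMap.adjoint_inner_right, Cpow_chi_inner hμ hC]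

lemma phi_surj (S : Lp ℂ 2 μ →L[ℂ] Lp ℂ 2 μ) (hS : S.comp C = 1) :
    Function.Surjective φ := by
  intro y
  by_contra h
  push_neg at h
  have hC0 : C (chi hμ y) = 0 := by
    rw [Lp_eq_zero_iff hμ]
    intro x
    rw [C_apply hμ hC]
    exact chi_ne hμ (h x)
  have : chi hμ y = 0 := by
    have := congrArg (fun T => T (chi hμ y)) hS
    simp only [ContinuousLinearMap.comp_apply, ContinuousLinearMap.one_apply] at this
    rw [← this, hC0, map_zero]
  have h1 := chi_self hμ y
  rw [this] at h1
  rw [Lp_eq_zero_iff hμ (0 : Lp ℂ 2 μ) |>.1 rfl y] at h1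
  exact one_ne_zero h1.symm

omit hμ hC in
lemma regroup (n : ℕ) (a : X) :
    μ ((φ^[n+1]) ⁻¹' {a}) = ∑' u : ((φ^[n]) ⁻¹' {a} : Set X), μ (φ ⁻¹' {(u : X)}) := by
  have hset : (φ^[n+1]) ⁻¹' {a} = ⋃ u : ((φ^[n]) ⁻¹' {a} : Set X), φ ⁻¹' {(u : X)} := by
    ext x
    simp only [Set.mem_preimage, Set.mem_singleton_iff, Set.mem_iUnion]
    constructor
    · intro h
      refine ⟨⟨φ x, ?_⟩, rfl⟩
      show φ^[n] (φ x) = a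
      rw [← Function.iterate_succ_apply]
      exact h
    · rintro ⟨⟨u, hu⟩, hx⟩
      show φ^[n+1] x = a
      rw [Function.iterate_succ_apply, hx]
      exact hu
  rw [hset, measure_iUnion]
  · intro u v huv
    simp only [Function.onFun]
    apply Set.disjoint_left.2
    intro x hx hx'
    simp only [Set.mem_preimage, Set.mem_singleton_iff] at hx hx'
    exact huv (Subtype.ext (hx ▸ hx'))
  · exact fun u => (Set.to_countable _).measurableSet

end CompKC

namespace CompKC
open scoped ENNReal Classical

variable {X : Type*} [MeasurableSpace X] [MeasurableSingletonClass X] [Countable X]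
  {μ : Measure X} (hμ : ∀ x : X, 0 < μ {x} ∧ μ {x} < ⊤)
  {φ : X → X} {C : Lp ℂ 2 μ →L[ℂ] Lp ℂ 2 μ}
  (hC : ∀ f : Lp ℂ 2 μ, (C f : X → ℂ) =ᵐ[μ] fun x => f (φ x))

lemma ratio_ne_top {A B : ℝ≥0∞} (hA : A ≠ ⊤) (hB : B ≠ 0) : A / B ≠ ⊤ := by
  intro h
  rw [ENNReal.div_eq_top] at h
  rcases h with ⟨-, h⟩ | ⟨h, -⟩
  · exact hB h
  · exact hA h

lemma div_eq_unfold {A B ρ : ℝ≥0∞} (hB0 : B ≠ 0) (hBt : B ≠ ⊤) (h : A / B = ρ) :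
    A = ρ * B := by
  rw [← h]
  exact (ENNReal.div_mul_cancel hB0 hBt).symm

lemma ennreal_mul_div (ρ A B : ℝ≥0∞) : ρ * A / B = ρ * (A / B) := by
  rw [div_eq_mul_inv, div_eq_mul_inv, mul_assoc]

lemma factor (n : ℕ) (a : X) (ρ : ℝ≥0∞)
    (hρ : ∀ u, φ^[n] u = a → μ (φ ⁻¹' {u}) = ρ * μ {u}) :
    μ ((φ^[n+1]) ⁻¹' {a}) = ρ * μ ((φ^[n]) ⁻¹' {a}) := by
  rw [regroup]
  rw [tsum_congr (fun u : ((φ^[n]) ⁻¹' {a} : Set X) => hρ u u.2), ENNReal.tsum_mul_left,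
    ← meas_eq_tsum]

lemma fsum_two {a b : X} (hab : a ≠ b) (F : X → ℂ)
    (hsupp : ∀ x, x ≠ a → x ≠ b → F x = 0) (w : X) :
    fsum μ φ F w = (if φ a = w then ((μ {a}).toReal : ℂ) * F a else 0)
      + (if φ b = w then ((μ {b}).toReal : ℂ) * F b else 0) := by
  classical
  rw [fsum, tsum_subtype (φ ⁻¹' {w}) (fun x => ((μ {x}).toReal : ℂ) * F x)]
  rw [tsum_eq_sum (s := {a, b}) ?hout]
  case hout =>
    intro x hx
    simp only [Finset.mem_insert, Finset.mem_singleton, not_or] at hx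
    by_cases h : x ∈ φ ⁻¹' {w}
    · rw [Set.indicator_of_mem h, hsupp x hx.1 hx.2, mul_zero]
    · rw [Set.indicator_of_notMem h]
  rw [Finset.sum_pair hab]
  have ha' : (φ ⁻¹' {w}).indicator (fun x => ((μ {x}).toReal : ℂ) * F x) a
      = if φ a = w then ((μ {a}).toReal : ℂ) * F a else 0 := by
    by_cases h : φ a = w
    · rw [Set.indicator_of_mem (show a ∈ φ ⁻¹' {w} from h), if_pos h]
    · rw [Set.indicator_of_notMem (show a ∉ φ ⁻¹' {w} from h), if_neg h]
  have hb' : (φ ⁻¹' {w}).indicator (fun x => ((μ {x}).toReal : ℂ) * F x) b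
      = if φ b = w then ((μ {b}).toReal : ℂ) * F b else 0 := by
    by_cases h : φ b = w
    · rw [Set.indicator_of_mem (show b ∈ φ ⁻¹' {w} from h), if_pos h]
    · rw [Set.indicator_of_notMem (show b ∉ φ ⁻¹' {w} from h), if_neg h]
  rw [ha', hb']

include hμ hC in
lemma kc_pair {k : ℕ} (hK : KernelCondition C k) {a b : X} (hab : a ≠ b) (hfab : φ a = φ b)
    {n : ℕ} (hn1 : 1 ≤ n) (hnk : n ≤ k) :
    (μ ((φ^[n]) ⁻¹' {a})).toReal * ((μ {a}).toReal)⁻¹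
      = (μ ((φ^[n]) ⁻¹' {b})).toReal * ((μ {b}).toReal)⁻¹ := by
  classical
  set g : Lp ℂ 2 μ := (((μ {a}).toReal : ℂ))⁻¹ • chi hμ a - (((μ {b}).toReal : ℂ))⁻¹ • chi hμ b
    with hgdef
  have hg : ∀ x, (g : X → ℂ) x = ((μ {a}).toReal : ℂ)⁻¹ * (chi hμ a : Lp ℂ 2 μ) x
      - ((μ {b}).toReal : ℂ)⁻¹ * (chi hμ b : Lp ℂ 2 μ) x := by
    intro x
    have h1 := aeeq_all (fun x => (hμ x).1)
      (Lp.coeFn_sub ((((μ {a}).toReal : ℂ))⁻¹ • chi hμ a)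
        ((((μ {b}).toReal : ℂ))⁻¹ • chi hμ b)) x
    have h2 := aeeq_all (fun x => (hμ x).1)
      (Lp.coeFn_smul (((μ {a}).toReal : ℂ))⁻¹ (chi hμ a)) x
    have h3 := aeeq_all (fun x => (hμ x).1)
      (Lp.coeFn_smul (((μ {b}).toReal : ℂ))⁻¹ (chi hμ b)) x
    rw [hgdef]
    rw [h1, Pi.sub_apply, h2, h3, Pi.smul_apply, Pi.smul_apply, smul_eq_mul, smul_eq_mul]
  have hga : (g : X → ℂ) a = ((μ {a}).toReal : ℂ)⁻¹ := by
    rw [hg, chi_self hμ, chi_ne hμ hab, mul_zero, sub_zero, mul_one]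
  have hgb : (g : X → ℂ) b = -((μ {b}).toReal : ℂ)⁻¹ := by
    rw [hg, chi_self hμ, chi_ne hμ hab.symm, mul_zero, zero_sub, mul_one]
  have hgsupp : ∀ x, x ≠ a → x ≠ b → (g : X → ℂ) x = 0 := by
    intro x hxa hxb
    rw [hg, chi_ne hμ hxa, chi_ne hμ hxb, mul_zero, mul_zero, sub_zero]
  have hker : g ∈ LinearMap.ker ((ContinuousLinearMap.adjoint C : Lp ℂ 2 μ →L[ℂ] Lp ℂ 2 μ) : Lp ℂ 2 μ →ₗ[ℂ] Lp ℂ 2 μ) := by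
    rw [mem_ker_iff hμ hC]
    intro w
    rw [fsum_two hab _ hgsupp w, hga, hgb, hfab]
    by_cases h : φ b = w
    · rw [if_pos h, if_pos h, mul_neg]
      rw [mul_inv_cancel₀ (by simpa using toReal_ne_zero hμ a),
        mul_inv_cancel₀ (by simpa using toReal_ne_zero hμ b)]
      ring
    · rw [if_neg h, if_neg h, add_zero]
  have h2 := hK n hn1 hnk g hker
  rw [mem_ker_iff hμ hC] at h2
  have h3 := h2 (φ a)
  have hBsupp : ∀ x, x ≠ a → x ≠ b → ((opBr C n g : Lp ℂ 2 μ) : X → ℂ) x = 0 := by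
    intro x hxa hxb
    have h5 := opBr_eval hμ hC n g x
    rw [hgsupp x hxa hxb, mul_zero] at h5
    exact (mul_eq_zero.1 h5).resolve_left (by simpa using toReal_ne_zero hμ x)
  rw [fsum_two hab _ hBsupp (φ a), if_pos rfl, if_pos hfab.symm] at h3
  rw [opBr_eval hμ hC n g a, opBr_eval hμ hC n g b, hga, hgb] at h3
  rw [mul_neg, add_neg_eq_zero] at h3
  have h4 := h3
  push_cast at h4
  exact_mod_cast h4

include hμ hC in
lemma dir_mp (S : Lp ℂ 2 μ →L[ℂ] Lp ℂ 2 μ) (hS : S.comp C = 1) {k : ℕ}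
    (hK : KernelCondition C k) :
    ∀ i, 1 ≤ i → i ≤ k → ∀ y z, φ^[i] y = φ^[i] z →
      μ (φ ⁻¹' {y}) / μ {y} = μ (φ ⁻¹' {z}) / μ {z} := by
  classical
  have hsurj := phi_surj hμ hC S hS
  have hfin1 : ∀ y : X, μ (φ ⁻¹' {y}) ≠ ⊤ := by
    intro y
    have h := fiber_ne_top hμ hC 1 y
    simpa using h
  have hfinn : ∀ (n : ℕ) (y : X), μ ((φ^[n]) ⁻¹' {y}) ≠ ⊤ := fiber_ne_top hμ hC
  have hposn : ∀ (n : ℕ) (y : X), μ ((φ^[n]) ⁻¹' {y}) ≠ 0 := by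
    intro n y
    obtain ⟨x, hx⟩ := (hsurj.iterate n) y
    intro h0
    have hle : μ {x} ≤ μ ((φ^[n]) ⁻¹' {y}) :=
      measure_mono (Set.singleton_subset_iff.2 hx)
    rw [h0] at hle
    exact (hμ x).1.ne' (le_antisymm hle zero_le)
  intro i
  induction i using Nat.strong_induction_on with
  | _ i IH =>
    intro hi1 hik y z hyz
    by_cases hyzeq : y = z
    · rw [hyzeq]
    have hgoal_iff := ENNReal.toReal_eq_toReal_iff'
      (ratio_ne_top (hfin1 y) (hμ y).1.ne') (ratio_ne_top (hfin1 z) (hμ z).1.ne')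
    have hP0 : φ^[0] y ≠ φ^[0] z := by simpa using hyzeq
    set j := Nat.findGreatest (fun j => φ^[j] y ≠ φ^[j] z) (i - 1) with hjdef
    have hji : j ≤ i - 1 := Nat.findGreatest_le _
    have hPj : φ^[j] y ≠ φ^[j] z :=
      Nat.findGreatest_spec (P := fun j => φ^[j] y ≠ φ^[j] z) (Nat.zero_le _) hP0
    have hnext : φ^[j+1] y = φ^[j+1] z := by
      by_cases hcase : j + 1 ≤ i - 1
      · have h := Nat.findGreatest_is_greatest (P := fun j => φ^[j] y ≠ φ^[j] z)
          (n := i - 1) (k := j + 1) (by omega) hcase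
        exact not_ne_iff.1 h
      · have h : j + 1 = i := by omega
        rw [h]; exact hyz
    have hfab : φ (φ^[j] y) = φ (φ^[j] z) := by
      rw [← Function.iterate_succ_apply' φ j y, ← Function.iterate_succ_apply' φ j z]
      exact hnext
    by_cases hj0 : j = 0
    · -- base case : the split is at the root, a = y, b = z
      rw [hj0] at hPj hfab
      simp only [Function.iterate_zero_apply] at hPj hfab
      have hky := kc_pair hμ hC hK hPj hfab (n := 1) le_rfl (by omega)
      simp only [Function.iterate_one] at hky
      apply hgoal_iff.1
      rw [ENNReal.toReal_div, ENNReal.toReal_div, div_eq_mul_inv, div_eq_mul_inv]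
      exact hky
    · have hj1 : 1 ≤ j := Nat.one_le_iff_ne_zero.2 hj0
      have hjk : j ≤ k := by omega
      have hjk1 : j + 1 ≤ k := by omega
      have h1 := kc_pair hμ hC hK hPj hfab (n := j + 1) (by omega) hjk1
      have h2 := kc_pair hμ hC hK hPj hfab (n := j) hj1 hjk
      -- factorization at a := φ^[j] y
      have hua : ∀ u, φ^[j] u = φ^[j] y →
          μ (φ ⁻¹' {u}) = (μ (φ ⁻¹' {y}) / μ {y}) * μ {u} := by
        intro u hu
        exact div_eq_unfold (hμ u).1.ne' (hμ u).2.ne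
          (IH j (by omega) hj1 hjk u y hu)
      have hub : ∀ u, φ^[j] u = φ^[j] z →
          μ (φ ⁻¹' {u}) = (μ (φ ⁻¹' {z}) / μ {z}) * μ {u} := by
        intro u hu
        exact div_eq_unfold (hμ u).1.ne' (hμ u).2.ne
          (IH j (by omega) hj1 hjk u z hu)
      have hFa := factor j (φ^[j] y) _ hua
      have hFb := factor j (φ^[j] z) _ hub
      have hFa' : (μ ((φ^[j+1]) ⁻¹' {φ^[j] y})).toReal
          = (μ (φ ⁻¹' {y}) / μ {y}).toReal * (μ ((φ^[j]) ⁻¹' {φ^[j] y})).toReal := by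
        rw [hFa, ENNReal.toReal_mul]
      have hFb' : (μ ((φ^[j+1]) ⁻¹' {φ^[j] z})).toReal
          = (μ (φ ⁻¹' {z}) / μ {z}).toReal * (μ ((φ^[j]) ⁻¹' {φ^[j] z})).toReal := by
        rw [hFb, ENNReal.toReal_mul]
      rw [hFa', hFb'] at h1
      have hne : (μ ((φ^[j]) ⁻¹' {φ^[j] y})).toReal * ((μ {φ^[j] y}).toReal)⁻¹ ≠ 0 :=
        mul_ne_zero (ENNReal.toReal_ne_zero.2 ⟨hposn j _, hfinn j _⟩)
          (inv_ne_zero (toReal_ne_zero hμ _))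
      apply hgoal_iff.1
      apply mul_right_cancel₀ hne
      calc (μ (φ ⁻¹' {y}) / μ {y}).toReal *
            ((μ ((φ^[j]) ⁻¹' {φ^[j] y})).toReal * ((μ {φ^[j] y}).toReal)⁻¹)
          = (μ (φ ⁻¹' {y}) / μ {y}).toReal * (μ ((φ^[j]) ⁻¹' {φ^[j] y})).toReal *
            ((μ {φ^[j] y}).toReal)⁻¹ := by ring
        _ = (μ (φ ⁻¹' {z}) / μ {z}).toReal * (μ ((φ^[j]) ⁻¹' {φ^[j] z})).toReal *
            ((μ {φ^[j] z}).toReal)⁻¹ := h1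
        _ = (μ (φ ⁻¹' {z}) / μ {z}).toReal *
            ((μ ((φ^[j]) ⁻¹' {φ^[j] z})).toReal * ((μ {φ^[j] z}).toReal)⁻¹) := by ring
        _ = (μ (φ ⁻¹' {z}) / μ {z}).toReal *
            ((μ ((φ^[j]) ⁻¹' {φ^[j] y})).toReal * ((μ {φ^[j] y}).toReal)⁻¹) := by rw [h2]

include hμ hC in
lemma dir_mpr (S : Lp ℂ 2 μ →L[ℂ] Lp ℂ 2 μ) (hS : S.comp C = 1) {k : ℕ} (hk : 1 ≤ k)
    (hconst : ∀ i, 1 ≤ i → i ≤ k → ∀ y z, φ^[i] y = φ^[i] z →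
      μ (φ ⁻¹' {y}) / μ {y} = μ (φ ⁻¹' {z}) / μ {z}) :
    KernelCondition C k := by
  classical
  have hsurj := phi_surj hμ hC S hS
  have claim : ∀ n, 1 ≤ n → n ≤ k → ∀ a b : X, φ a = φ b →
      μ ((φ^[n]) ⁻¹' {a}) / μ {a} = μ ((φ^[n]) ⁻¹' {b}) / μ {b} := by
    intro n hn1
    induction n, hn1 using Nat.le_induction with
    | base =>
      intro _ a b hab
      have h := hconst 1 le_rfl hk a b (by simpa using hab)
      simpa using h
    | succ n hn1 IH2 =>
      intro hnk a b hab
      obtain ⟨w, hw⟩ := (hsurj.iterate (n+1)) (φ a)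
      have key : ∀ u, φ^[n+1] u = φ a →
          μ (φ ⁻¹' {u}) = (μ (φ ⁻¹' {w}) / μ {w}) * μ {u} := by
        intro u hu
        exact div_eq_unfold (hμ u).1.ne' (hμ u).2.ne
          (hconst (n+1) (by omega) hnk u w (hu.trans hw.symm))
      have hFa := factor n a (μ (φ ⁻¹' {w}) / μ {w}) (fun u hu => key u (by
        rw [Function.iterate_succ_apply', hu]))
      have hFb := factor n b (μ (φ ⁻¹' {w}) / μ {w}) (fun u hu => key u (by
        rw [Function.iterate_succ_apply', hu]
        exact hab.symm))
      rw [hFa, hFb, ennreal_mul_div, ennreal_mul_div, IH2 (by omega) a b hab]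
  intro n hn1 hnk g hg
  rw [mem_ker_iff hμ hC] at hg ⊢
  intro w
  obtain ⟨x₀, hx₀⟩ := hsurj w
  have hterm : ∀ u : (φ ⁻¹' {w} : Set X),
      ((μ {(u : X)}).toReal : ℂ) * ((opBr C n g : Lp ℂ 2 μ) : X → ℂ) u
        = (((μ ((φ^[n]) ⁻¹' {x₀}) / μ {x₀}).toReal : ℝ) : ℂ) *
          (((μ {(u : X)}).toReal : ℂ) * (g : X → ℂ) u) := by
    rintro ⟨u, hu⟩
    have hopu := opBr_eval hμ hC n g u
    have hru : μ ((φ^[n]) ⁻¹' {u}) / μ {u} = μ ((φ^[n]) ⁻¹' {x₀}) / μ {x₀} :=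
      claim n hn1 hnk u x₀ (by rw [hx₀]; exact hu)
    have hmu : (μ ((φ^[n]) ⁻¹' {u})).toReal
        = (μ ((φ^[n]) ⁻¹' {x₀}) / μ {x₀}).toReal * (μ {u}).toReal := by
      rw [div_eq_unfold (hμ u).1.ne' (hμ u).2.ne hru, ENNReal.toReal_mul]
    rw [hopu, hmu]
    push_cast
    ring
  have : fsum μ φ ((opBr C n g : Lp ℂ 2 μ) : X → ℂ) w
      = ∑' u : (φ ⁻¹' {w} : Set X),
        (((μ ((φ^[n]) ⁻¹' {x₀}) / μ {x₀}).toReal : ℝ) : ℂ) *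
          (((μ {(u : X)}).toReal : ℂ) * (g : X → ℂ) u) := by
    rw [fsum]
    exact tsum_congr hterm
  rw [this, tsum_mul_left]
  have hfg : (∑' u : (φ ⁻¹' {w} : Set X), ((μ {(u : X)}).toReal : ℂ) * (g : X → ℂ) u)
      = fsum μ φ (g : X → ℂ) w := rfl
  rw [hfg, hg w, mul_zero]

end CompKC

end CompKCAux

/-- Theorem 2.5. On a discrete measure space, a bounded left-invertible
composition operator `C_φ` on `L²(μ)` satisfies the `k`-kernel condition iff the Radon–Nikodym
derivative `h(y) = μ(φ⁻¹({y}))/μ({y})` is constant on the preimages `φ^{-i}({x})` for all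
`i ∈ {1, …, k}` and every `x ∈ X`. -/
theorem compositionOperator_kernelCondition_iff
    {X : Type*} [MeasurableSpace X] [MeasurableSingletonClass X] [Countable X] [Infinite X]
    (μ : Measure X) (hμ : ∀ x : X, 0 < μ {x} ∧ μ {x} < ⊤)
    (φ : X → X)
    (C S : Lp ℂ 2 μ →L[ℂ] Lp ℂ 2 μ)
    (hC : ∀ f : Lp ℂ 2 μ, (C f : X → ℂ) =ᵐ[μ] fun x => f (φ x))
    (hS : S.comp C = 1) (k : ℕ) (hk : 1 ≤ k) :
    KernelCondition C k ↔
      ∀ i, 1 ≤ i → i ≤ k → ∀ x y z : X, φ^[i] y = x → φ^[i] z = x →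
        μ (φ ⁻¹' {y}) / μ {y} = μ (φ ⁻¹' {z}) / μ {z} := by
  constructor
  · intro hK i hi1 hik x y z hy hz
    exact CompKC.dir_mp hμ hC S hS hK i hi1 hik y z (hy.trans hz.symm)
  · intro hconst
    exact CompKC.dir_mpr hμ hC S hS hk
      (fun i h1 h2 y z hyz => hconst i h1 h2 (φ^[i] y) y z rfl hyz.symm)
end
end
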